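/- arXiv:2206.09884 — 2 statements merged into one kernel-verified Lean document; each statement's English description precedes it below -/
import Mathlib

section
/- Let G be a finite simple graph, let k > 0 be an integer, and let T ⊆ F ⊆ V(G) with T nonempty and G[T] connected. Suppose that every degree-1 vertex v of G satisfies F = {v} (the instance is almost leafless), and that |N_G(T)| > k(k+1). Then either G contains no k-secluded supertree of F, or there exists a vertex v ∈ V(G) \ F such that every k-secluded supertree H of F in G satisfies v ∈ N_G(H). -/
namespace Secluded

open SimpleGraph

variable {V : Type*}

/-- The open neighborhood of a vertex set `S`: vertices outside `S` with a neighbor in `S`. -/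
def openNbhd (G : SimpleGraph V) (S : Set V) : Set V :=
  {v | v ∉ S ∧ ∃ u ∈ S, G.Adj v u}

/-- The graph obtained from `G` by deleting the vertices in `D`
(kept on the same vertex type; deleted vertices become isolated). -/
def gdelete (G : SimpleGraph V) (D : Set V) : SimpleGraph V where
  Adj x y := G.Adj x y ∧ x ∉ D ∧ y ∉ D
  symm := ⟨fun _ _ h => ⟨h.1.symm, h.2.2, h.2.1⟩⟩
  loopless := ⟨fun x h => G.loopless.irrefl x h.1⟩

/-- `S` induces a tree (connected and acyclic induced subgraph) in `G`. -/
def IsInducedTree (G : SimpleGraph V) (S : Set V) : Prop :=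
  (G.induce S).IsTree

/-- `S` is a `k`-secluded tree in `G`. -/
def IsSecludedTree (G : SimpleGraph V) (k : ℕ) (S : Set V) : Prop :=
  IsInducedTree G S ∧ (openNbhd G S).ncard ≤ k

/-- The set of `k`-secluded supertrees of `F` in `G`. -/
def secl (G : SimpleGraph V) (k : ℕ) (F : Set V) : Set (Set V) :=
  {S | IsSecludedTree G k S ∧ F ⊆ S}

/-- Total weight of a vertex set. -/
noncomputable def weight (w : V → ℕ) (S : Set V) : ℕ := ∑ᶠ x ∈ S, w x

/-- The maximum-weight elements of a collection of vertex sets. -/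
def maxset (w : V → ℕ) (X : Set (Set V)) : Set (Set V) :=
  {S | S ∈ X ∧ ∀ S' ∈ X, weight w S' ≤ weight w S}

/-- `S` consists of exactly one vertex from each member of `𝒳`. -/
def IsTransversal (𝒳 : Set (Set V)) (S : Set V) : Prop :=
  S ⊆ ⋃₀ 𝒳 ∧ ∀ X ∈ 𝒳, (S ∩ X).ncard = 1

/-- The vertex set of the connected component of `G − S` containing `r`. -/
def component (G : SimpleGraph V) (S : Set V) (r : V) : Set V :=
  {x | (gdelete G S).Reachable r x}

/-- `(r, 𝒳)` is a description for `G`. -/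
def IsDescription (G : SimpleGraph V) (r : V) (𝒳 : Set (Set V)) : Prop :=
  (∀ X ∈ 𝒳, r ∉ X) ∧ 𝒳.Pairwise Disjoint ∧
    ∀ S : Set V, IsTransversal 𝒳 S →
      (G.induce (component G S r)).IsAcyclic ∧ openNbhd G (component G S r) = S

/-- The induced tree (given by its vertex set `C`) is described by the description `D`. -/
def Describes (G : SimpleGraph V) (D : V × Set (Set V)) (C : Set V) : Prop :=
  D.1 ∈ C ∧ IsTransversal D.2 (openNbhd G C)

/-- `𝒯_G(𝔛)`: the set of induced trees of `G` described by some member of `𝔛`. -/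
def treesOf (G : SimpleGraph V) (𝔛 : Set (V × Set (Set V))) : Set (Set V) :=
  {C | IsInducedTree G C ∧ ∃ D ∈ 𝔛, Describes G D C}

/-- No induced tree of `G` is described by two distinct members of `𝔛`. -/
def NonRedundant (G : SimpleGraph V) (𝔛 : Set (V × Set (Set V))) : Prop :=
  ∀ C : Set V, IsInducedTree G C → ∀ D₁ ∈ 𝔛, ∀ D₂ ∈ 𝔛,
    Describes G D₁ C → Describes G D₂ C → D₁ = D₂

/-- Degree of a vertex. -/
noncomputable def degOf (G : SimpleGraph V) (v : V) : ℕ := (G.neighborSet v).ncard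



section Helpers

variable {G : SimpleGraph V}

def liftInduce {S : Set V} :
    ∀ {a b : V} (p : G.Walk a b) (hs : ∀ x ∈ p.support, x ∈ S),
      (G.induce S).Walk ⟨a, hs a p.start_mem_support⟩ ⟨b, hs b p.end_mem_support⟩
  | _, _, Walk.nil, _ => Walk.nil
  | _, _, Walk.cons h p, hs =>
      Walk.cons (by exact h) (liftInduce p (fun x hx => hs x (by simp [hx])))

lemma map_liftInduce {S : Set V} {a b : V} (p : G.Walk a b) (hs : ∀ x ∈ p.support, x ∈ S) :
    (liftInduce p hs).map (SimpleGraph.Embedding.induce S).toHom = p := by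
  induction p with
  | nil => rfl
  | cons h p ih =>
    simp only [liftInduce]
    erw [Walk.map_cons, ih]
    rfl

/-- In a graph whose induced subgraph on `S` is acyclic, any two paths between the same
endpoints supported in `S` coincide. -/
lemma path_unique_of_induce_acyclic {S : Set V} (hS : (G.induce S).IsAcyclic)
    {a b : V} (p q : G.Walk a b) (hp : p.IsPath) (hq : q.IsPath)
    (hps : ∀ x ∈ p.support, x ∈ S) (hqs : ∀ x ∈ q.support, x ∈ S) : p = q := by
  rw [isAcyclic_iff_path_unique] at hS
  have hinj : Function.Injective (SimpleGraph.Embedding.induce (G := G) S).toHom :=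
    Subtype.val_injective
  have hpP : (liftInduce p hps).IsPath := by
    rw [← Walk.map_isPath_iff_of_injective hinj, map_liftInduce]; exact hp
  have hqP : (liftInduce q hqs).IsPath := by
    rw [← Walk.map_isPath_iff_of_injective hinj, map_liftInduce]; exact hq
  have hqb : (⟨b, hps b p.end_mem_support⟩ : S) = ⟨b, hqs b q.end_mem_support⟩ := rfl
  have := hS (v := ⟨a, hps a p.start_mem_support⟩) (w := ⟨b, hps b p.end_mem_support⟩)
    ⟨liftInduce p hps, hpP⟩ ⟨liftInduce q hqs, hqP⟩
  have h2 : liftInduce p hps = liftInduce q hqs := by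
    simpa using congrArg Subtype.val this
  have e1 := map_liftInduce p hps
  have e2 := map_liftInduce q hqs
  rw [h2] at e1
  exact e1.symm.trans e2

/-- Acyclicity of induced subgraphs is monotone. -/
lemma induce_acyclic_mono {S S' : Set V} (hsub : S ⊆ S')
    (hac : (G.induce S').IsAcyclic) : (G.induce S).IsAcyclic := by
  rw [isAcyclic_iff_path_unique]
  intro u w p q
  have hinj : Function.Injective (SimpleGraph.Embedding.induce (G := G) S).toHom :=
    Subtype.val_injective
  have hsupp : ∀ (r : (G.induce S).Walk u w) (x : V),
      x ∈ (r.map (SimpleGraph.Embedding.induce S).toHom).support → x ∈ S' := by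
    intro r x hx
    rw [Walk.support_map] at hx
    obtain ⟨y, _, rfl⟩ := List.mem_map.mp hx
    exact hsub y.2
  have := path_unique_of_induce_acyclic hac _ _
    ((Walk.map_isPath_iff_of_injective hinj).mpr p.2)
    ((Walk.map_isPath_iff_of_injective hinj).mpr q.2)
    (hsupp p.1) (hsupp q.1)
  exact Subtype.ext (Walk.map_injective_of_injective hinj _ _ this)

lemma gdelete_le (D : Set V) : gdelete G D ≤ G := fun x y (h : G.Adj x y ∧ x ∉ D ∧ y ∉ D) => h.1

lemma reach_gdelete_cases {D : Set V} {a x : V} (h : (gdelete G D).Reachable a x) :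
    x = a ∨ x ∉ D := by
  obtain ⟨w⟩ := h
  induction w with
  | nil => exact Or.inl rfl
  | @cons u v z h p ih =>
    rcases ih with rfl | hx
    · exact Or.inr (show G.Adj u z ∧ u ∉ D ∧ z ∉ D from h).2.2
    · exact Or.inr hx

lemma exists_path_of_gdelete_reachable {D : Set V} {a b : V}
    (h : (gdelete G D).Reachable a b) :
    ∃ p : G.Walk a b, p.IsPath ∧ ∀ x ∈ p.support, (gdelete G D).Reachable a x := by
  classical
  obtain ⟨w⟩ := h
  refine ⟨w.bypass.map (Hom.ofLE (gdelete_le D)), ?_, ?_⟩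
  · exact (Walk.map_isPath_iff_of_injective (fun x y h => h)).mpr w.bypass_isPath
  · intro x hx
    rw [Walk.support_map] at hx
    obtain ⟨y, hy, rfl⟩ := List.mem_map.mp hx
    exact ⟨(w.bypass.takeUntil y hy)⟩

lemma exists_exit_of_walk {S' : Set V} :
    ∀ {a b : V} (p : G.Walk a b), a ∉ S' → b ∈ S' →
      ∃ y ∈ p.support, y ∉ S' ∧ y ∈ openNbhd G S'
  | a, _, Walk.nil, ha, hb => absurd hb ha
  | a, b, Walk.cons (v := v) h p, ha, hb => by
    by_cases hv : v ∈ S'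
    · exact ⟨a, by simp, ha, ha, v, hv, h⟩
    · obtain ⟨y, hy, h1, h2⟩ := exists_exit_of_walk p hv hb
      exact ⟨y, by simp [hy], h1, h2⟩

lemma exists_exit_of_walk' {S' : Set V} {a b : V} (p : G.Walk a b)
    (hb : b ∈ S') {z : V} (hz : z ∈ p.support) (hzS : z ∉ S') :
    ∃ y ∈ p.support, y ∉ S' ∧ y ∈ openNbhd G S' := by
  classical
  obtain ⟨y, hy, h1, h2⟩ := exists_exit_of_walk (p.dropUntil z hz) hzS hb
  exact ⟨y, p.support_dropUntil_subset hz hy, h1, h2⟩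

lemma isPath_append_edge {c : V} :
    ∀ {a b : V} (p : G.Walk a b), p.IsPath → (h : G.Adj b c) → c ∉ p.support →
      (p.append (Walk.cons h Walk.nil)).IsPath
  | a, _, Walk.nil, hp, h, hc => by
    rw [Walk.nil_append, Walk.cons_isPath_iff]
    exact ⟨Walk.IsPath.nil, by simpa using h.ne⟩
  | a, b, Walk.cons (v := v) h' p, hp, h, hc => by
    rw [Walk.cons_append, Walk.cons_isPath_iff]
    rw [Walk.cons_isPath_iff] at hp
    refine ⟨isPath_append_edge p hp.1 h (fun hmem => hc (by simp [hmem])), ?_⟩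
    rw [Walk.mem_support_append_iff]
    rintro (h1 | h1)
    · exact hp.2 h1
    · simp only [Walk.support_cons, Walk.support_nil, List.mem_cons, List.mem_singleton] at h1
      rcases h1 with rfl | h1
      · exact hp.2 p.end_mem_support
      · simp at h1
        exact hc (by simp [h1])

lemma degree_induce (S : Set V) (x : V) (hx : x ∈ S)
    [Fintype ((G.induce S).neighborSet ⟨x, hx⟩)] :
    (G.induce S).degree ⟨x, hx⟩ = (S ∩ G.neighborSet x).ncard := by
  rw [← card_neighborSet_eq_degree, ← Nat.card_coe_set_eq, ← Nat.card_eq_fintype_card]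
  apply Nat.card_congr
  exact {
    toFun := fun y => ⟨y.1.1, y.1.2, y.2⟩
    invFun := fun y => ⟨⟨y.1, y.2.1⟩, y.2.2⟩
    left_inv := fun y => rfl
    right_inv := fun y => rfl }

lemma branch_escape [Fintype V] (G : SimpleGraph V) {T C : Set V} {u t : V}
    (hTconn : (G.induce T).Connected)
    (hacW : (G.induce (C ∪ T)).IsAcyclic) (hacT : (G.induce T).IsAcyclic)
    (hCT : Disjoint C T) (hu : u ∈ C) (ht : t ∈ T) (hut : G.Adj u t)
    (hconn : ∀ c ∈ C, ∃ p : G.Walk u c, ∀ x ∈ p.support, x ∈ C)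
    (hclosed : ∀ c ∈ C, ∀ x, G.Adj c x → x ∈ C ∪ T)
    (hleafless : ∀ c ∈ C, (G.neighborSet c).ncard ≠ 1) : False := by
  classical
  set W : Set V := C ∪ T with hW
  letI : Fintype ↥W := (Set.toFinite W).fintype
  letI : Fintype ↥T := (Set.toFinite T).fintype
  letI : Fintype ↥C := (Set.toFinite C).fintype
  set GW := G.induce W with hGW
  set GT := G.induce T with hGT
  letI : DecidableRel GW.Adj := Classical.decRel _
  letI : DecidableRel GT.Adj := Classical.decRel _
  -- GT is a tree
  have hTtree : GT.IsTree := ⟨hTconn, hacT⟩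
  -- GW is connected
  have hUreach : ∀ b : ↥W, GW.Reachable ⟨u, Or.inl hu⟩ b := by
    rintro ⟨b, hb | hb⟩
    · obtain ⟨p, hp⟩ := hconn b hb
      exact ⟨(liftInduce p (fun x hx => Or.inl (hp x hx))).copy rfl rfl⟩
    · obtain ⟨q⟩ := hTconn.preconnected ⟨t, ht⟩ ⟨b, hb⟩
      let pw : G.Walk u b := Walk.cons hut (q.map (SimpleGraph.Embedding.induce T).toHom)
      have hpw : ∀ x ∈ pw.support, x ∈ W := by
        intro x hx
        replace hx : x = u ∨ x ∈ (q.map (SimpleGraph.Embedding.induce T).toHom).support :=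
          List.mem_cons.mp hx
        simp only [Walk.support_map, List.mem_map] at hx
        rcases hx with rfl | ⟨y, _, rfl⟩
        · exact Or.inl hu
        · exact Or.inr y.2
      exact ⟨(liftInduce pw hpw).copy rfl rfl⟩
  have hWconn : GW.Connected := by
    haveI : Nonempty ↥W := ⟨⟨u, Or.inl hu⟩⟩
    exact ⟨fun a b => (hUreach a).symm.trans (hUreach b)⟩
  have hWtree : GW.IsTree := ⟨hWconn, hacW⟩
  -- counting
  have hTedges := hTtree.card_edgeFinset
  have hWedges := hWtree.card_edgeFinset
  have hhs := GW.sum_degrees_eq_twice_card_edges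
  -- lower bound on degrees
  have hCdeg : ∀ c ∈ C, 2 ≤ (W ∩ G.neighborSet c).ncard := by
    intro c hc
    have hsub : G.neighborSet c ⊆ W := fun x hx => hclosed c hc x hx
    rw [Set.inter_eq_self_of_subset_right hsub]
    have hne : (G.neighborSet c).Nonempty := by
      obtain ⟨p, hp⟩ := hconn c hc
      by_cases hcu : c = u
      · exact ⟨t, hcu ▸ hut⟩
      · obtain ⟨x, hadj, q, _⟩ := Walk.not_nil_iff.mp
          (Walk.not_nil_of_ne hcu (p := p.reverse))
        exact ⟨x, hadj⟩
    have h1 : 1 ≤ (G.neighborSet c).ncard := by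
      rwa [Nat.one_le_iff_ne_zero, Ne, Set.ncard_eq_zero (Set.toFinite _),
        ← Ne, ← Set.nonempty_iff_ne_empty]
    have h2 := hleafless c hc
    omega
  -- the weight function for the degree lower bound
  set dfun : V → ℕ :=
    fun x => if x ∈ C then 2 else (T ∩ G.neighborSet x).ncard + (if x = t then 1 else 0)
    with hdfun
  have hkey : ∀ w : ↥W, dfun w.1 ≤ GW.degree w := by
    rintro ⟨x, hx⟩
    rw [degree_induce (G := G) W x hx]
    by_cases hxC : x ∈ C
    · rw [hdfun]; simp only [if_pos hxC]
      exact hCdeg x hxC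
    · have hxT : x ∈ T := hx.resolve_left hxC
      rw [hdfun]; simp only [if_neg hxC]
      by_cases hxt : x = t
      · subst hxt
        simp only [if_pos rfl]
        have hins : insert u (T ∩ G.neighborSet x) ⊆ W ∩ G.neighborSet x := by
          rintro y (rfl | ⟨h1, h2⟩)
          · exact ⟨Or.inl hu, hut.symm⟩
          · exact ⟨Or.inr h1, h2⟩
        have hnotmem : u ∉ T ∩ G.neighborSet x :=
          fun h => (hCT.ne_of_mem hu h.1) rfl
        calc (T ∩ G.neighborSet x).ncard + 1
            = (insert u (T ∩ G.neighborSet x)).ncard :=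
              (Set.ncard_insert_of_notMem hnotmem (Set.toFinite _)).symm
          _ ≤ (W ∩ G.neighborSet x).ncard :=
              Set.ncard_le_ncard hins (Set.toFinite _)
      · simp only [if_neg hxt, Nat.add_zero]
        exact Set.ncard_le_ncard (Set.inter_subset_inter_left _ (Set.subset_union_right))
          (Set.toFinite _)
  -- summation
  have hsum_le : ∑ w : ↥W, dfun w.1 ≤ ∑ w : ↥W, GW.degree w :=
    Finset.sum_le_sum (fun w _ => hkey w)
  have hsum1 : ∑ w : ↥W, dfun w.1 = ∑ x ∈ W.toFinset, dfun x :=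
    (Finset.sum_subtype W.toFinset (fun x => Set.mem_toFinset) dfun).symm
  have hdisjF : Disjoint C.toFinset T.toFinset := by
    rw [Set.disjoint_toFinset]; exact hCT
  have hWsplit : W.toFinset = C.toFinset ∪ T.toFinset := by
    ext x; simp [hW]
  have hsplit : ∑ x ∈ W.toFinset, dfun x
      = ∑ x ∈ C.toFinset, dfun x + ∑ x ∈ T.toFinset, dfun x := by
    rw [hWsplit, Finset.sum_union hdisjF]
  have hCsum : ∑ x ∈ C.toFinset, dfun x = 2 * C.toFinset.card := by
    have hcg : ∀ x ∈ C.toFinset, dfun x = 2 := by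
      intro x hx
      simp only [hdfun]
      rw [if_pos (Set.mem_toFinset.mp hx)]
    rw [Finset.sum_congr rfl hcg, Finset.sum_const, smul_eq_mul, Nat.mul_comm]
  have hTsum : ∑ x ∈ T.toFinset, dfun x
      = 2 * GT.edgeFinset.card + 1 := by
    have step1 : ∑ x ∈ T.toFinset, dfun x
        = ∑ x ∈ T.toFinset, ((T ∩ G.neighborSet x).ncard + (if x = t then 1 else 0)) := by
      refine Finset.sum_congr rfl (fun x hx => ?_)
      simp only [hdfun]
      rw [if_neg (fun hxc => (hCT.ne_of_mem hxc (Set.mem_toFinset.mp hx)) rfl)]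
    rw [step1, Finset.sum_add_distrib]
    have step2 : ∑ x ∈ T.toFinset, (if x = t then 1 else 0)
        = (1 : ℕ) := by
      rw [Finset.sum_ite_eq' T.toFinset t (fun _ => 1)]
      simp [ht]
    have step3 : ∑ x ∈ T.toFinset, (T ∩ G.neighborSet x).ncard
        = ∑ y : ↥T, GT.degree y := by
      rw [Finset.sum_subtype T.toFinset (fun x => Set.mem_toFinset)
        (fun x => (T ∩ G.neighborSet x).ncard)]
      exact Finset.sum_congr rfl (fun y _ => (degree_induce (G := G) T y.1 y.2).symm)
    rw [step2, step3, GT.sum_degrees_eq_twice_card_edges]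
  -- final arithmetic
  have hcardW : Fintype.card ↥W = C.toFinset.card + T.toFinset.card := by
    rw [← Set.toFinset_card, hWsplit, Finset.card_union_of_disjoint hdisjF]
  have hcardT : Fintype.card ↥T = T.toFinset.card := (Set.toFinset_card T).symm
  rw [hhs] at hsum_le
  rw [hsum1, hsplit, hCsum, hTsum] at hsum_le
  rw [hcardW] at hWedges
  rw [hcardT] at hTedges
  omega

end Helpers


/-- in an almost leafless instance with `k > 0` and `|N_G(T)| > k(k+1)`,
either `G` has no `k`-secluded supertree of `F`, or there is a vertex `v ∉ F` lying in the
open neighborhood of every `k`-secluded supertree of `F` in `G`. -/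

theorem exists_forced_neighborhood_vertex [Fintype V] (G : SimpleGraph V) (k : ℕ)
    (hk : 0 < k) (T F : Set V) (hTF : T ⊆ F) (hT : T.Nonempty)
    (hTconn : (G.induce T).Connected)
    (hleaf : ∀ v : V, degOf G v = 1 → F = {v})
    (hbig : k * (k + 1) < (openNbhd G T).ncard) :
    secl G k F = ∅ ∨ ∃ v : V, v ∉ F ∧ ∀ S ∈ secl G k F, v ∈ openNbhd G S := by
  classical
  rcases Set.eq_empty_or_nonempty (secl G k F) with he | ⟨H, hH⟩
  · exact Or.inl he
  right
  obtain ⟨⟨hHtree, hHsec⟩, hFH⟩ := hH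
  have hTH : T ⊆ H := hTF.trans hFH
  have hacH : (G.induce H).IsAcyclic := hHtree.2
  -- Step 0 : no leaves at all
  have hnoleaf : ∀ x : V, degOf G x ≠ 1 := by
    intro x hx
    have hFx := hleaf x hx
    have hTx : T = {x} := by
      apply Set.eq_singleton_iff_nonempty_unique_mem.mpr
      exact ⟨hT, fun y hy => by have := hTF hy; rwa [hFx] at this⟩
    have hNT : openNbhd G T = G.neighborSet x := by
      ext y
      constructor
      · rintro ⟨hy1, u, hu, hadj⟩
        rw [hTx] at hu
        cases hu
        exact hadj.symm
      · intro hy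
        refine ⟨fun hyT => ?_, x, by rw [hTx]; rfl, hy.symm⟩
        rw [hTx] at hyT
        cases hyT
        exact G.loopless.irrefl x hy
    rw [hNT] at hbig
    have : (G.neighborSet x).ncard = 1 := hx
    nlinarith [hk]
  -- T-walks
  have hTwalk : ∀ t₁ ∈ T, ∀ t₂ ∈ T, ∃ r : G.Walk t₁ t₂, ∀ x ∈ r.support, x ∈ T := by
    intro t₁ h₁ t₂ h₂
    obtain ⟨q⟩ := hTconn.preconnected ⟨t₁, h₁⟩ ⟨t₂, h₂⟩
    refine ⟨q.map (SimpleGraph.Embedding.induce T).toHom, ?_⟩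
    intro x hx
    change x ∈ (q.map (SimpleGraph.Embedding.induce T).toHom).support at hx
    rw [Walk.support_map] at hx
    obtain ⟨y, _, rfl⟩ := List.mem_map.mp hx
    exact y.2
  -- T neighbors of vertices in openNbhd T
  have htOf' : ∀ u, u ∈ openNbhd G T → ∃ t ∈ T, G.Adj u t := fun u hu => hu.2
  choose! tOf htOfT htOfAdj using htOf'
  -- components of H - T
  set D : Set V := (H \ T)ᶜ with hD
  set Comp : V → Set V := fun u => {x | (gdelete G D).Reachable u x} with hComp
  set A : Set V := openNbhd G T ∩ H with hA
  have hAHT : ∀ u ∈ A, u ∈ H \ T := fun u hu => ⟨hu.2, hu.1.1⟩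
  have hCompsub : ∀ u ∈ A, Comp u ⊆ H \ T := by
    intro u hu x hx
    rcases reach_gdelete_cases hx with h | hxD
    · rw [h]; exact hAHT u hu
    · simpa [hD] using hxD
  have hCompconn : ∀ u, ∀ c ∈ Comp u, ∃ p : G.Walk u c, p.IsPath ∧ ∀ x ∈ p.support, x ∈ Comp u := by
    intro u c hc
    obtain ⟨p, hp1, hp2⟩ := exists_path_of_gdelete_reachable hc
    exact ⟨p, hp1, hp2⟩
  -- disjointness of distinct components
  have hCompdisj : ∀ u₁ ∈ A, ∀ u₂ ∈ A, u₁ ≠ u₂ → ∀ z, z ∈ Comp u₁ → z ∈ Comp u₂ → False := by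
    intro u₁ h₁ u₂ h₂ hne z hz₁ hz₂
    have hreach : (gdelete G D).Reachable u₁ u₂ := hz₁.trans hz₂.symm
    obtain ⟨p, hpp, hpsupp⟩ := exists_path_of_gdelete_reachable hreach
    have hpsupp' : ∀ x ∈ p.support, x ∈ Comp u₁ := hpsupp
    have ht₂ := htOfT u₂ h₂.1
    have ht₁ := htOfT u₁ h₁.1
    have hadj₂ := htOfAdj u₂ h₂.1
    have hadj₁ := htOfAdj u₁ h₁.1
    -- path 1 : u₁ → u₂ → t₂ inside Comp u₁ ∪ {t₂}
    have ht₂notin : tOf u₂ ∉ p.support := fun hmem =>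
      (hCompsub u₁ h₁ (hpsupp' _ hmem)).2 ht₂
    have hpath1 : (p.append (Walk.cons hadj₂ Walk.nil)).IsPath :=
      isPath_append_edge p hpp hadj₂ ht₂notin
    -- path 2 : u₁ → t₁ → ... → t₂ inside {u₁} ∪ T
    obtain ⟨r, hrT⟩ := hTwalk (tOf u₁) ht₁ (tOf u₂) ht₂
    set q : G.Walk u₁ (tOf u₂) := (Walk.cons hadj₁ r).bypass with hq
    have hqpath : q.IsPath := Walk.bypass_isPath _
    have hqsupp : ∀ x ∈ q.support, x = u₁ ∨ x ∈ T := by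
      intro x hx
      have := Walk.support_bypass_subset _ hx
      have h' : x = u₁ ∨ x ∈ r.support := by simpa using this
      rcases h' with rfl | hxx
      · exact Or.inl rfl
      · exact Or.inr (hrT x hxx)
    have heq : p.append (Walk.cons hadj₂ Walk.nil) = q := by
      apply path_unique_of_induce_acyclic hacH _ _ hpath1 hqpath
      · intro x hx
        rw [Walk.mem_support_append_iff] at hx
        rcases hx with hx | hx
        · exact (hCompsub u₁ h₁ (hpsupp' x hx)).1
        · have h' : x = u₂ ∨ x = tOf u₂ := by simpa using hx
          rcases h' with rfl | rfl
          · exact (hCompsub u₁ h₁ (hpsupp' _ p.end_mem_support)).1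
          · exact hTH ht₂
      · intro x hx
        rcases hqsupp x hx with h' | hx
        · rw [h']; exact (hCompsub u₁ h₁ (hpsupp' _ p.start_mem_support)).1
        · exact hTH hx
    have hu₂mem : u₂ ∈ (p.append (Walk.cons hadj₂ Walk.nil)).support := by
      rw [Walk.mem_support_append_iff]
      exact Or.inl p.end_mem_support
    rw [heq] at hu₂mem
    rcases hqsupp u₂ hu₂mem with rfl | hx
    · exact hne rfl
    · exact h₂.1.1 hx
  -- every component has a neighbor in openNbhd H
  have hbranch : ∀ u ∈ A, ∃ c ∈ Comp u, ∃ x, x ∈ openNbhd G H ∧ G.Adj c x := by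
    intro u hu
    by_contra hno
    push_neg at hno
    have huC : u ∈ Comp u := Reachable.refl u
    have hclosed : ∀ c ∈ Comp u, ∀ x, G.Adj c x → x ∈ Comp u ∪ T := by
      intro c hc x hadj
      by_cases hxT : x ∈ T
      · exact Or.inr hxT
      by_cases hxH : x ∈ H
      · left
        have hcHT := hCompsub u hu hc
        have : (gdelete G D).Adj c x := by
          show G.Adj c x ∧ c ∉ D ∧ x ∉ D
          refine ⟨hadj, ?_, ?_⟩
          · simp [hD]; exact hcHT
          · simp [hD]; exact ⟨hxH, hxT⟩
        exact hc.trans ⟨this.toWalk⟩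
      · exact absurd hadj (fun h => hno c hc x ⟨hxH, c, (hCompsub u hu hc).1, h.symm⟩ h)
    refine branch_escape G hTconn ?_ ?_ ?_ huC (htOfT u hu.1) (htOfAdj u hu.1)
      (fun c hc => (hCompconn u c hc).imp (fun p hp => hp.2)) hclosed
      (fun c _ => hnoleaf c)
    · apply induce_acyclic_mono _ hacH
      rintro x (hx | hx)
      · exact (hCompsub u hu hx).1
      · exact hTH hx
    · exact induce_acyclic_mono hTH hacH
    · rw [Set.disjoint_left]
      exact fun x hx => (hCompsub u hu hx).2
  choose! cOf hcOfmem vOf hvOfmem hvOfadj using hbranch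
  -- pigeonhole setup
  set φ : V → V := fun w => if w ∈ H then vOf w else w with hφ
  have hmaps : ∀ w ∈ (openNbhd G T).toFinset, φ w ∈ (openNbhd G H).toFinset := by
    intro w hw
    rw [Set.mem_toFinset] at hw ⊢
    by_cases hwH : w ∈ H
    · simp only [hφ]; rw [if_pos hwH]
      exact hvOfmem w ⟨hw, hwH⟩
    · simp only [hφ]; rw [if_neg hwH]
      exact ⟨hwH, Exists.elim hw.2 (fun t ht => ⟨t, hTH ht.1, ht.2⟩)⟩
  have hcards : (openNbhd G H).toFinset.card * (k + 1) < (openNbhd G T).toFinset.card := by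
    have h1 : (openNbhd G H).toFinset.card ≤ k := by
      rw [← Set.ncard_eq_toFinset_card']
      exact hHsec
    calc (openNbhd G H).toFinset.card * (k+1) ≤ k * (k+1) := Nat.mul_le_mul_right _ h1
      _ < (openNbhd G T).ncard := hbig
      _ = (openNbhd G T).toFinset.card := Set.ncard_eq_toFinset_card' _
  obtain ⟨v, hvNH, hfib⟩ :=
    Finset.exists_lt_card_fiber_of_mul_lt_card_of_maps_to hmaps hcards
  rw [Set.mem_toFinset] at hvNH
  have hvnotH : v ∉ H := hvNH.1
  refine ⟨v, fun hvF => hvnotH (hFH hvF), ?_⟩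
  -- the sets U' ⊆ U ∪ {v}
  set U' : Finset V := {x ∈ (openNbhd G T).toFinset | φ x = v} with hU'
  set U : Finset V := {x ∈ U' | x ∈ H} with hU
  have hUsub : ∀ u ∈ U, u ∈ A ∧ vOf u = v := by
    intro u hu
    rw [hU, Finset.mem_filter] at hu
    obtain ⟨hu1, hu2⟩ := hu
    rw [hU', Finset.mem_filter, Set.mem_toFinset] at hu1
    refine ⟨⟨hu1.1, hu2⟩, ?_⟩
    have h3 := hu1.2
    simp only [hφ] at h3
    rwa [if_pos hu2] at h3
  have hU'subU : U' ⊆ U ∪ {v} := by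
    intro w hw
    by_cases hwH : w ∈ H
    · exact Finset.mem_union_left _ (by rw [hU, Finset.mem_filter]; exact ⟨hw, hwH⟩)
    · have h3 := (Finset.mem_filter.mp (hU' ▸ hw)).2
      simp only [hφ] at h3
      rw [if_neg hwH] at h3
      subst h3
      exact Finset.mem_union_right _ (Finset.mem_singleton_self _)
  have hUcard : k + 1 ≤ U.card := by
    have := Finset.card_le_card hU'subU
    have h2 := Finset.card_union_le U {v}
    simp only [Finset.card_singleton] at h2
    omega
  have hUcard2 : v ∉ openNbhd G T → k + 2 ≤ U.card := by
    intro hvNT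
    have hsub : U' ⊆ U := by
      intro w hw
      by_cases hwH : w ∈ H
      · rw [hU, Finset.mem_filter]; exact ⟨hw, hwH⟩
      · exfalso
        have h1 := (Finset.mem_filter.mp (hU' ▸ hw)).2
        simp only [hφ] at h1
        rw [if_neg hwH] at h1
        have h2 := (Finset.mem_filter.mp (hU' ▸ hw)).1
        rw [Set.mem_toFinset] at h2
        exact hvNT (h1 ▸ h2)
    have := Finset.card_le_card hsub
    omega
  -- per-element data
  have hdata : ∀ u ∈ U, ∃ p : G.Walk (cOf u) u,
      G.Adj v (cOf u) ∧ cOf u ∈ Comp u ∧ p.IsPath ∧ (∀ x ∈ p.support, x ∈ Comp u) := by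
    intro u hu
    obtain ⟨huA, hvu⟩ := hUsub u hu
    obtain ⟨p, hp1, hp2⟩ := hCompconn u (cOf u) (hcOfmem u huA)
    refine ⟨p.reverse, ?_, hcOfmem u huA, hp1.reverse, ?_⟩
    · have := hvOfadj u huA
      rw [hvu] at this
      exact this.symm
    · intro x hx
      rw [Walk.support_reverse, List.mem_reverse] at hx
      exact hp2 x hx
  choose! pOf hpadj hpc hppath hpsupp using hdata
  -- now the main goal
  intro S' hS'
  obtain ⟨⟨hS'tree, hS'sec⟩, hFS'⟩ := hS'
  have hTS' : T ⊆ S' := hTF.trans hFS'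
  have hacS' : (G.induce S').IsAcyclic := hS'tree.2
  by_contra hcon
  -- the full walks
  have hwalks : ∀ u ∈ U, ∃ w : G.Walk v (tOf u), w.IsPath ∧ tOf u ∈ T ∧
      (∀ x ∈ w.support, x = v ∨ x ∈ Comp u ∨ x = tOf u) ∧
      cOf u ∈ w.support := by
    intro u hu
    obtain ⟨huA, hvu⟩ := hUsub u hu
    have hadjut := htOfAdj u huA.1
    have htT := htOfT u huA.1
    have htnotin : tOf u ∉ (pOf u hu).support := fun hmem =>
      (hCompsub u huA (hpsupp u hu _ hmem)).2 htT
    have hmid : ((pOf u hu).append (Walk.cons hadjut Walk.nil)).IsPath :=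
      isPath_append_edge _ (hppath u hu) hadjut htnotin
    have hvnotin : v ∉ ((pOf u hu).append (Walk.cons hadjut Walk.nil)).support := by
      rw [Walk.mem_support_append_iff]
      rintro (hx | hx)
      · exact hvnotH (hCompsub u huA (hpsupp u hu _ hx)).1
      · have h' : v = u ∨ v = tOf u := by simpa using hx
        rcases h' with h' | h'
        · exact hvnotH (h'.symm ▸ (hCompsub u huA (hpsupp u hu _ (pOf u hu).end_mem_support)).1)
        · exact hvnotH (h' ▸ hTH htT)
    refine ⟨Walk.cons (hpadj u hu) ((pOf u hu).append (Walk.cons hadjut Walk.nil)),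
      Walk.IsPath.cons hmid hvnotin, htT, ?_, ?_⟩
    · intro x hx
      have h0 : x = v ∨ x ∈ ((pOf u hu).append (Walk.cons hadjut Walk.nil)).support := by
        simpa using hx
      rcases h0 with rfl | hx
      · exact Or.inl rfl
      rw [Walk.mem_support_append_iff] at hx
      rcases hx with hx | hx
      · exact Or.inr (Or.inl (hpsupp u hu _ hx))
      · have h' : x = u ∨ x = tOf u := by simpa using hx
        rcases h' with h' | h'
        · exact Or.inr (Or.inl (h' ▸ hpsupp u hu _ (pOf u hu).end_mem_support))
        · exact Or.inr (Or.inr h')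
    · simp only [Walk.support_cons, List.mem_cons]
      right
      rw [Walk.mem_support_append_iff]
      exact Or.inl (pOf u hu).start_mem_support
  choose! wOf hwpath hwtT hwsupp hwc using hwalks
  have hncS' : (openNbhd G S').toFinset.card ≤ k := by
    rw [← Set.ncard_eq_toFinset_card']
    exact hS'sec
  by_cases hvS' : v ∈ S'
  · -- v inside S' : at most one of the walks can stay inside S'
    have honefull : ∀ u₁ (hu₁ : u₁ ∈ U), (∀ x ∈ (wOf u₁ hu₁).support, x ∈ S') →
        ∀ u₂ (hu₂ : u₂ ∈ U), u₁ ≠ u₂ → (∀ x ∈ (wOf u₂ hu₂).support, x ∈ S') → False := by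
      intro u₁ hu₁ hfull₁ u₂ hu₂ hne hfull₂
      have huA₁ := (hUsub u₁ hu₁).1
      have huA₂ := (hUsub u₂ hu₂).1
      obtain ⟨r, hrT⟩ := hTwalk (tOf u₁) (hwtT u₁ hu₁) (tOf u₂) (hwtT u₂ hu₂)
      set q : G.Walk v (tOf u₂) := ((wOf u₁ hu₁).append r).bypass with hq
      have hqpath : q.IsPath := Walk.bypass_isPath _
      have hqsupp0 : ∀ x ∈ q.support, x ∈ (wOf u₁ hu₁).support ∨ x ∈ r.support := by
        intro x hx
        have := Walk.support_bypass_subset _ hx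
        rw [Walk.mem_support_append_iff] at this
        exact this
      have heq : q = wOf u₂ hu₂ := by
        apply path_unique_of_induce_acyclic hacS' _ _ hqpath (hwpath u₂ hu₂) _ hfull₂
        intro x hx
        rcases hqsupp0 x hx with hx | hx
        · exact hfull₁ x hx
        · exact hTS' (hrT x hx)
      have hc₂ : cOf u₂ ∈ q.support := by rw [heq]; exact hwc u₂ hu₂
      rcases hqsupp0 _ hc₂ with hx | hx
      · rcases hwsupp u₁ hu₁ _ hx with h' | h' | h'
        · exact hvnotH (h' ▸ (hCompsub u₂ huA₂ (hpc u₂ hu₂)).1)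
        · exact hCompdisj u₁ huA₁ u₂ huA₂ hne (cOf u₂) h' (hpc u₂ hu₂)
        · exact (hCompsub u₂ huA₂ (hpc u₂ hu₂)).2 (h' ▸ hwtT u₁ hu₁)
      · exact (hCompsub u₂ huA₂ (hpc u₂ hu₂)).2 (hrT _ hx)
    have hdirectkill : v ∈ openNbhd G T →
        ∀ u₁ (hu₁ : u₁ ∈ U), (∀ x ∈ (wOf u₁ hu₁).support, x ∈ S') → False := by
      intro hvT u₁ hu₁ hfull₁
      have huA₁ := (hUsub u₁ hu₁).1
      obtain ⟨r, hrT⟩ := hTwalk (tOf v) (htOfT v hvT) (tOf u₁) (hwtT u₁ hu₁)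
      set d : G.Walk v (tOf u₁) := (Walk.cons (htOfAdj v hvT) r).bypass with hd
      have hdpath : d.IsPath := Walk.bypass_isPath _
      have hdsupp : ∀ x ∈ d.support, x = v ∨ x ∈ T := by
        intro x hx
        have h0 := Walk.support_bypass_subset _ hx
        have h1 : x = v ∨ x ∈ r.support := by simpa using h0
        rcases h1 with h1 | h1
        · exact Or.inl h1
        · exact Or.inr (hrT x h1)
      have heq : d = wOf u₁ hu₁ := by
        apply path_unique_of_induce_acyclic hacS' _ _ hdpath (hwpath u₁ hu₁) _ hfull₁
        intro x hx
        rcases hdsupp x hx with h' | h'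
        · exact h' ▸ hvS'
        · exact hTS' h'
      have hc₁ : cOf u₁ ∈ d.support := by rw [heq]; exact hwc u₁ hu₁
      rcases hdsupp _ hc₁ with h' | h'
      · exact hvnotH (h' ▸ (hCompsub u₁ huA₁ (hpc u₁ hu₁)).1)
      · exact (hCompsub u₁ huA₁ (hpc u₁ hu₁)).2 h'
    -- the set of indices whose walk leaves S'
    set Uex : Finset V := {u ∈ U | ∃ x, (∃ hu : u ∈ U, x ∈ (wOf u hu).support) ∧ x ∉ S'}
      with hUex
    have hUexU : Uex ⊆ U := Finset.filter_subset _ _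
    have hUexcard : k + 1 ≤ Uex.card := by
      by_cases hvT : v ∈ openNbhd G T
      · have : U ⊆ Uex := by
          intro u hu
          rw [hUex, Finset.mem_filter]
          refine ⟨hu, ?_⟩
          by_contra hfull
          exact hdirectkill hvT u hu (fun x hx => by
            by_contra hxS
            exact hfull ⟨x, ⟨hu, hx⟩, hxS⟩)
        have := Finset.card_le_card this
        omega
      · have hcard2 := hUcard2 (by exact hvT)
        have hsd : (U \ Uex).card ≤ 1 := by
          rw [Finset.card_le_one]
          intro a ha b hb
          by_contra hab
          have haU : a ∈ U := (Finset.mem_sdiff.mp ha).1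
          have haN : a ∉ Uex := (Finset.mem_sdiff.mp ha).2
          have hbU : b ∈ U := (Finset.mem_sdiff.mp hb).1
          have hbN : b ∉ Uex := (Finset.mem_sdiff.mp hb).2
          have hafull : ∀ x ∈ (wOf a haU).support, x ∈ S' := by
            intro x hx
            by_contra hxS
            exact haN (Finset.mem_filter.mpr ⟨haU, x, ⟨haU, hx⟩, hxS⟩)
          have hbfull : ∀ x ∈ (wOf b hbU).support, x ∈ S' := by
            intro x hx
            by_contra hxS
            exact hbN (Finset.mem_filter.mpr ⟨hbU, x, ⟨hbU, hx⟩, hxS⟩)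
          exact honefull a haU hafull b hbU hab hbfull
        have h4 := Finset.card_sdiff_add_card_eq_card hUexU
        omega
    have hexit : ∀ u ∈ Uex, ∃ y, y ∈ Comp u ∧ y ∈ openNbhd G S' := by
      intro u hu
      have huU := hUexU hu
      rw [hUex, Finset.mem_filter] at hu
      obtain ⟨-, x, ⟨hu', hx⟩, hxS⟩ := hu
      have hx' : x ∈ (wOf u huU).support := hx
      obtain ⟨y, hy, hyS, hyN⟩ := exists_exit_of_walk' (wOf u huU) (hTS' (hwtT u huU)) hx' hxS
      rcases hwsupp u huU y hy with h' | h' | h'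
      · exact absurd (h'.symm ▸ hvS' : y ∈ S') hyS
      · exact ⟨y, h', hyN⟩
      · exact absurd (h'.symm ▸ (hTS' (hwtT u huU)) : y ∈ S') hyS
    choose! yOf hy1 hy2 using hexit
    have hcount : Uex.card ≤ (openNbhd G S').toFinset.card := by
      apply Finset.card_le_card_of_injOn yOf
      · intro u hu
        rw [Finset.mem_coe, Set.mem_toFinset]
        exact hy2 u hu
      · intro a ha b hb heq
        rw [Finset.mem_coe] at ha hb
        by_contra hab
        have h1 := hy1 a ha
        have h2 := hy1 b hb
        rw [← heq] at h2
        exact hCompdisj a (hUsub a (hUexU ha)).1 b (hUsub b (hUexU hb)).1 hab (yOf a) h1 h2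
    omega
  · -- v outside S'
    have hvNT : v ∉ openNbhd G T := fun hvT =>
      hcon ⟨hvS', tOf v, hTS' (htOfT v hvT), htOfAdj v hvT⟩
    have hcardU := hUcard2 hvNT
    have hexit : ∀ u ∈ U, ∃ y, y ∈ Comp u ∧ y ∈ openNbhd G S' := by
      intro u hu
      have huA := (hUsub u hu).1
      have htT := htOfT u huA.1
      have hadjut := htOfAdj u huA.1
      have hcS : cOf u ∉ S' := fun hcS => hcon ⟨hvS', cOf u, hcS, hpadj u hu⟩
      obtain ⟨y, hy, hyS, hyN⟩ :=
        exists_exit_of_walk ((pOf u hu).append (Walk.cons hadjut Walk.nil)) hcS (hTS' htT)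
      rw [Walk.mem_support_append_iff] at hy
      refine ⟨y, ?_, hyN⟩
      rcases hy with hy | hy
      · exact hpsupp u hu _ hy
      · have h' : y = u ∨ y = tOf u := by simpa using hy
        rcases h' with h' | h'
        · exact h' ▸ hpsupp u hu _ (pOf u hu).end_mem_support
        · exact absurd (hTS' (h' ▸ htT)) hyS
    choose! yOf hy1 hy2 using hexit
    have hcount : U.card ≤ (openNbhd G S').toFinset.card := by
      apply Finset.card_le_card_of_injOn yOf
      · intro u hu
        rw [Finset.mem_coe, Set.mem_toFinset]
        exact hy2 u hu
      · intro a ha b hb heq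
        rw [Finset.mem_coe] at ha hb
        by_contra hab
        have h1 := hy1 a ha
        have h2 := hy1 b hb
        rw [← heq] at h2
        exact hCompdisj a (hUsub a ha).1 b (hUsub b hb).1 hab (yOf a) h1 h2
    omega

end Secluded
end

section
/- Let G be a finite connected simple graph with positive vertex weights w, let k ≥ 0 be an integer, and let T ⊆ F ⊆ V(G) with T nonempty, G[T] connected, and N_G(F) ≠ ∅. Suppose every degree-1 vertex u of G satisfies F = {u} (the instance is almost leafless). Let P = (v₁, v₂, …, v_ℓ) be a path in G disjoint from T with v₁ ∈ N_G(T), deg_G(v_i) = 2 for every 1 ≤ i < ℓ, and such that v_ℓ ∈ N_G(T) or deg_G(v_ℓ) > 2. Then for every maximum-weight k-secluded supertree H of F in G, exactly one of the following holds: (1) v_ℓ ∈ N_G(H) (so v_ℓ ∉ F); (2) |N_G(H) ∩ (V(P) \ (F ∪ {v_ℓ}))| = 1 and v_ℓ ∈ V(H); (3) V(P) ⊆ V(H). -/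
namespace Secluded

open SimpleGraph

variable {V : Type*}

lemma getVert_inj {G : SimpleGraph V} :
    ∀ {u v : V} {p : G.Walk u v}, p.IsPath → ∀ i ≤ p.length, ∀ j ≤ p.length,
      p.getVert i = p.getVert j → i = j := by
  intro u v p
  induction p with
  | nil => intro _ i hi j hj _; simp at hi hj; omega
  | cons h q ih =>
    intro hp i hi j hj hij
    rw [Walk.cons_isPath_iff] at hp
    match i, j with
    | 0, 0 => rfl
    | 0, j + 1 =>
      exfalso
      rw [Walk.getVert_zero, Walk.getVert_cons_succ] at hij
      exact hp.2 (Walk.mem_support_iff_exists_getVert.mpr ⟨j, hij.symm, by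
        simpa [Nat.succ_le_succ_iff] using hj⟩)
    | i + 1, 0 =>
      exfalso
      rw [Walk.getVert_zero, Walk.getVert_cons_succ] at hij
      exact hp.2 (Walk.mem_support_iff_exists_getVert.mpr ⟨i, hij, by
        simpa [Nat.succ_le_succ_iff] using hi⟩)
    | i + 1, j + 1 =>
      rw [Walk.getVert_cons_succ, Walk.getVert_cons_succ] at hij
      have := ih hp.1 i (by simpa [Nat.succ_le_succ_iff] using hi) j
        (by simpa [Nat.succ_le_succ_iff] using hj) hij
      omega

lemma walk_down {G : SimpleGraph V} {s t : Set V} (hst : s ⊆ t) :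
    ∀ {x y : ↥t} (p : (G.induce t).Walk x y) (hx : x.1 ∈ s) (hy : y.1 ∈ s),
      (∀ z ∈ p.support, z.1 ∈ s) →
      ∃ q : (G.induce s).Walk ⟨x.1, hx⟩ ⟨y.1, hy⟩,
        q.map (G.induceHomOfLE hst).toHom = p := by
  intro x y p
  induction p with
  | nil => intro hx hy _; exact ⟨Walk.nil, rfl⟩
  | @cons a b c h q ih =>
    intro hx hy hsupp
    have hb : b.1 ∈ s := hsupp b (by simp)
    obtain ⟨q', hq'⟩ := ih hb hy (fun z hz => hsupp z (by simp [hz]))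
    have hadj : (G.induce s).Adj ⟨a.1, hx⟩ ⟨b.1, hb⟩ := h
    exact ⟨Walk.cons hadj q', by rw [Walk.map_cons, hq']; rfl⟩


lemma nbr_eq {G : SimpleGraph V} {v x y : V} (hdeg : degOf G v = 2)
    (hx : G.Adj v x) (hy : G.Adj v y) (hxy : x ≠ y) {z : V} (hz : G.Adj v z) :
    z = x ∨ z = y := by
  by_cases hfin : (G.neighborSet v).Finite
  · have hsub : ({x, y} : Set V) ⊆ G.neighborSet v := by
      rintro w (rfl | rfl) <;> simpa
    have heq : ({x, y} : Set V) = G.neighborSet v :=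
      Set.eq_of_subset_of_ncard_le hsub (by rw [← degOf, hdeg, Set.ncard_pair hxy]) hfin
    have : z ∈ ({x, y} : Set V) := heq ▸ hz
    simpa using this
  · exfalso
    rw [degOf, Set.Infinite.ncard (by exact hfin)] at hdeg
    omega

lemma first_edge_mem {G : SimpleGraph V} {u v : V} (p : G.Walk u v) (hp : ¬ p.Nil) :
    s(u, p.getVert 1) ∈ p.edges := by
  cases p with
  | nil => simp at hp
  | cons h q => simp [Walk.getVert_cons_succ, Walk.getVert_zero]

lemma isTree_insert {G : SimpleGraph V} {S : Set V} {v a : V}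
    (hT : (G.induce S).IsTree) (hv : v ∉ S) (ha : a ∈ S) (hadj : G.Adj v a)
    (huniq : ∀ u ∈ S, G.Adj v u → u = a) :
    (G.induce (insert v S)).IsTree := by
  have hsub : S ⊆ insert v S := Set.subset_insert v S
  have hval : ∀ z : ↥(insert v S), z.1 ≠ v → z.1 ∈ S := by
    rintro ⟨z, (rfl | hz)⟩ hne
    · exact absurd rfl hne
    · exact hz
  set vv : ↥(insert v S) := ⟨v, Set.mem_insert v S⟩ with hvv
  set aa : ↥(insert v S) := ⟨a, hsub ha⟩ with haa
  constructor
  · constructor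
    · -- preconnected
      have hreach : ∀ x : ↥(insert v S), (G.induce (insert v S)).Reachable x aa := by
        intro x
        by_cases hx : x.1 = v
        · have : (G.induce (insert v S)).Adj x aa := by
            show G.Adj x.1 a
            rw [hx]; exact hadj
          exact this.reachable
        · have hxS : x.1 ∈ S := hval x hx
          have := hT.isConnected.preconnected ⟨x.1, hxS⟩ ⟨a, ha⟩
          have := this.map (G.induceHomOfLE hsub).toHom
          exact this
      intro x y
      exact (hreach x).trans (hreach y).symm
  · -- acyclic
    classical
    intro x c hc
    by_cases hvs : vv ∈ c.support
    · -- rotate to start at vv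
      have hc' := hc.rotate hvs
      set c' := c.rotate vv hvs with hc'def
      clear_value c'
      cases c' with
      | nil => exact hc'.ne_nil rfl
      | @cons _ b _ h p =>
        rw [Walk.cons_isCycle_iff] at hc'
        have hbne : b ≠ vv := h.ne'
        have hpnil : ¬ p.reverse.Nil := Walk.not_nil_of_ne (fun he => hbne he.symm)
        set b' := p.reverse.getVert 1 with hb'
        have hadj2 : (G.induce (insert v S)).Adj vv b' := p.reverse.adj_snd hpnil
        have hedge : s(vv, b') ∈ p.edges := by
          have h1 : s(vv, b') ∈ p.reverse.edges := first_edge_mem p.reverse hpnil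
          rwa [Walk.edges_reverse, List.mem_reverse] at h1
        have hbS : b.1 ∈ S := hval b (fun he => hbne (Subtype.ext he))
        have hb'S : b'.1 ∈ S := hval b' (fun he => hadj2.ne' (Subtype.ext he))
        have h1 : b.1 = a := huniq b.1 hbS h
        have h2 : b'.1 = a := huniq b'.1 hb'S hadj2
        have : b = b' := Subtype.ext (h1.trans h2.symm)
        rw [← this] at hedge
        exact hc'.2 hedge
    · -- cycle avoids v, pull down to S
      have hxS : x.1 ∈ S := hval x (fun he => hvs (by
        rw [show vv = x from Subtype.ext he.symm]; exact c.start_mem_support))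
      have hall : ∀ z ∈ c.support, z.1 ∈ S := by
        intro z hz
        exact hval z (fun he => hvs (by rwa [show vv = z from Subtype.ext he.symm]))
      obtain ⟨q, hq⟩ := walk_down hsub c hxS hxS hall
      have : q.IsCycle := by
        have hinj : Function.Injective (G.induceHomOfLE hsub).toHom := by
          intro u w huw
          exact (G.induceHomOfLE hsub).injective huw
        rw [← Walk.map_isCycle_iff_of_injective hinj, hq]
        exact hc
      exact hT.IsAcyclic q this

lemma weight_insert [Fintype V] (w : V → ℕ) {S : Set V} {v : V} (hv : v ∉ S) :
    weight w (insert v S) = w v + weight w S := by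
  rw [weight, weight, finsum_mem_insert w hv (Set.toFinite S)]

lemma reach_closed {G : SimpleGraph V} {H : Set V} {Q : V → Prop}
    (hcl : ∀ z, Q z → ∀ u, u ∈ H → G.Adj z u → Q u) :
    ∀ {x y : ↥H} (p : (G.induce H).Walk x y), Q x.1 → Q y.1 := by
  intro x y p
  induction p with
  | nil => exact id
  | @cons a b c h q ih => exact fun hx => ih (hcl a.1 hx b.1 b.2 h)


/-- three-way branching: for a maximal degree-2 path `P = (v₁, …, v_ℓ)`
growing out of `T`, every maximum-weight `k`-secluded supertree `H` of `F` satisfies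
exactly one of: (1) `v_ℓ ∈ N_G(H)`; (2) `|N_G(H) ∩ (V(P) \ (F ∪ {v_ℓ}))| = 1` and
`v_ℓ ∈ V(H)`; (3) `V(P) ⊆ V(H)`. -/
theorem three_way_branching [Fintype V] (G : SimpleGraph V) (hGconn : G.Connected)
    (w : V → ℕ) (hw : ∀ x : V, 0 < w x) (k : ℕ)
    (T F : Set V) (hTF : T ⊆ F) (hT : T.Nonempty)
    (hTconn : (G.induce T).Connected)
    (hNF : (openNbhd G F).Nonempty)
    (hleaf : ∀ u : V, degOf G u = 1 → F = {u})
    (v1 vl : V) (P : G.Walk v1 vl) (hP : P.IsPath)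
    (VP : Set V) (hVP : VP = {z | z ∈ P.support})
    (hPT : Disjoint VP T)
    (hv1 : v1 ∈ openNbhd G T)
    (hdeg2 : ∀ z ∈ VP, z ≠ vl → degOf G z = 2)
    (hvl : vl ∈ openNbhd G T ∨ 2 < degOf G vl)
    (H : Set V) (hH : H ∈ maxset w (secl G k F)) :
    (vl ∈ openNbhd G H ∧
        ¬((openNbhd G H ∩ (VP \ (F ∪ {vl}))).ncard = 1 ∧ vl ∈ H) ∧ ¬(VP ⊆ H)) ∨
      (vl ∉ openNbhd G H ∧
        ((openNbhd G H ∩ (VP \ (F ∪ {vl}))).ncard = 1 ∧ vl ∈ H) ∧ ¬(VP ⊆ H)) ∨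
      (vl ∉ openNbhd G H ∧
        ¬((openNbhd G H ∩ (VP \ (F ∪ {vl}))).ncard = 1 ∧ vl ∈ H) ∧ VP ⊆ H) := by
  classical
  obtain ⟨⟨⟨hHtree, hHk⟩, hFH⟩, hmax⟩ := hH
  have hTH : T ⊆ H := fun z hz => hFH (hTF hz)
  set n := P.length with hn
  have hmemVP : ∀ i, i ≤ n → P.getVert i ∈ VP := fun i hi => by
    rw [hVP]; exact Walk.mem_support_iff_exists_getVert.mpr ⟨i, rfl, hi⟩
  have hVPidx : ∀ z ∈ VP, ∃ i, P.getVert i = z ∧ i ≤ n := fun z hz => by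
    rw [hVP] at hz; exact Walk.mem_support_iff_exists_getVert.mp hz
  have hvlVP : vl ∈ VP := by rw [hVP]; exact P.end_mem_support
  have hgn : P.getVert n = vl := P.getVert_length
  have hne_vl : ∀ i, i < n → P.getVert i ≠ vl := by
    intro i hi he
    have := getVert_inj hP i (le_of_lt hi) n le_rfl (by rw [he, hgn])
    omega
  by_cases h1 : vl ∈ openNbhd G H
  · left
    refine ⟨h1, ?_, ?_⟩
    · rintro ⟨-, hvlH⟩; exact h1.1 hvlH
    · intro hsub; exact h1.1 (hsub hvlVP)
  by_cases h3 : VP ⊆ H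
  · right; right
    refine ⟨h1, ?_, h3⟩
    rintro ⟨hcard, -⟩
    have hemp : openNbhd G H ∩ (VP \ (F ∪ {vl})) = ∅ := by
      ext z
      simp only [Set.mem_inter_iff, Set.mem_empty_iff_false, iff_false, not_and]
      rintro hzN ⟨hzVP, -⟩
      exact hzN.1 (h3 hzVP)
    rw [hemp, Set.ncard_empty] at hcard
    omega
  right; left
  -- key exchange lemma
  have key : ∀ z, z ∈ VP → z ≠ vl → z ∉ H → ∀ u, u ∈ H → G.Adj z u →
      ∀ x, G.Adj z x → x ∈ H := by
    intro z hzVP hzvl hzH u huH hzu x hzx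
    by_contra hxH
    have hxu : x ≠ u := fun he => hxH (he ▸ huH)
    have hdegz : degOf G z = 2 := hdeg2 z hzVP hzvl
    have huniq : ∀ y ∈ H, G.Adj z y → y = u := by
      intro y hyH hzy
      rcases nbr_eq hdegz hzu hzx (fun he => hxu he.symm) hzy with h | h
      · exact h
      · exact absurd (h ▸ hyH) hxH
    have htree' : (G.induce (insert z H)).IsTree :=
      isTree_insert hHtree hzH huH hzu huniq
    have hzN : z ∈ openNbhd G H := ⟨hzH, u, huH, hzu⟩
    have hNsub : openNbhd G (insert z H) ⊆ insert x (openNbhd G H \ {z}) := by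
      rintro y ⟨hyH', w', hw', hyw⟩
      rcases Set.mem_insert_iff.mp hw' with rfl | hw'H
      · rcases nbr_eq hdegz hzu hzx (fun he => hxu he.symm) hyw.symm with hy | hy
        · exact absurd (by rw [hy]; exact Set.mem_insert_of_mem w' huH) hyH'
        · rw [hy]; exact Set.mem_insert x _
      · exact Set.mem_insert_of_mem _
          ⟨⟨fun hyH0 => hyH' (Set.mem_insert_of_mem z hyH0), w', hw'H, hyw⟩,
            fun he => hyH' (by rw [Set.mem_singleton_iff] at he; rw [he]; exact Set.mem_insert z H)⟩
    have hNcard : (openNbhd G (insert z H)).ncard ≤ k := by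
      have hc1 : (openNbhd G (insert z H)).ncard ≤ (insert x (openNbhd G H \ {z})).ncard :=
        Set.ncard_le_ncard hNsub (Set.toFinite _)
      have hc2 : (insert x (openNbhd G H \ {z})).ncard ≤ (openNbhd G H \ {z}).ncard + 1 :=
        Set.ncard_insert_le _ _
      have hc3 : (openNbhd G H \ {z}).ncard = (openNbhd G H).ncard - 1 :=
        Set.ncard_diff_singleton_of_mem hzN
      have hc4 : 0 < (openNbhd G H).ncard := (Set.ncard_pos (Set.toFinite _)).mpr ⟨z, hzN⟩
      omega
    have hsecl : insert z H ∈ secl G k F :=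
      ⟨⟨htree', hNcard⟩, fun y hy => Set.mem_insert_of_mem z (hFH hy)⟩
    have hle := hmax _ hsecl
    rw [weight_insert w hzH] at hle
    have := hw z
    omega
  -- least missing index
  have hex : ∃ i, i ≤ n ∧ P.getVert i ∉ H := by
    obtain ⟨z, hzVP, hzH⟩ := Set.not_subset.mp h3
    obtain ⟨i, hi1, hi2⟩ := hVPidx z hzVP
    exact ⟨i, hi2, by rw [hi1]; exact hzH⟩
  have hS0ne : {i | i ≤ n ∧ P.getVert i ∉ H}.Nonempty := hex
  set i₀ := sInf {i | i ≤ n ∧ P.getVert i ∉ H} with hi₀def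
  obtain ⟨hi₀n, hi₀H⟩ : i₀ ≤ n ∧ P.getVert i₀ ∉ H := Nat.sInf_mem hS0ne
  have hbefore : ∀ j, j < i₀ → P.getVert j ∈ H := by
    intro j hj
    by_contra hjH
    have hjm : j ∈ {i | i ≤ n ∧ P.getVert i ∉ H} := ⟨le_trans (le_of_lt hj) hi₀n, hjH⟩
    exact absurd (Nat.sInf_le hjm) (by omega)
  have hnbr : ∃ u ∈ H, G.Adj (P.getVert i₀) u := by
    rcases Nat.eq_zero_or_pos i₀ with h0 | hpos
    · obtain ⟨hv1T, t, htT, hv1t⟩ := hv1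
      exact ⟨t, hFH (hTF htT), by rw [h0, Walk.getVert_zero]; exact hv1t⟩
    · refine ⟨P.getVert (i₀ - 1), hbefore _ (by omega), ?_⟩
      have := P.adj_getVert_succ (i := i₀ - 1) (by omega)
      rw [Nat.sub_add_cancel hpos] at this
      exact this.symm
  have hi₀vl : P.getVert i₀ ≠ vl := by
    intro he
    obtain ⟨u, huH, hadj⟩ := hnbr
    exact h1 ⟨by rw [← he]; exact hi₀H, u, huH, by rw [← he]; exact hadj⟩
  have hi₀lt : i₀ < n := lt_of_le_of_ne hi₀n (fun he => hi₀vl (by rw [he, hgn]))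
  have hnext : P.getVert (i₀ + 1) ∈ H := by
    obtain ⟨u, huH, hadj⟩ := hnbr
    exact key _ (hmemVP i₀ hi₀n) hi₀vl hi₀H u huH hadj _ (P.adj_getVert_succ hi₀lt)
  -- all later vertices are in H
  have hrest : ∀ j, i₀ < j → j ≤ n → P.getVert j ∈ H := by
    by_contra hcon
    push_neg at hcon
    obtain ⟨j, hj1, hj2, hj3⟩ := hcon
    have hS1ne : {m | i₀ < m ∧ m ≤ n ∧ P.getVert m ∉ H}.Nonempty := ⟨j, hj1, hj2, hj3⟩
    set j₀ := sInf {m | i₀ < m ∧ m ≤ n ∧ P.getVert m ∉ H} with hj₀def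
    obtain ⟨hj₀1, hj₀2, hj₀3⟩ : i₀ < j₀ ∧ j₀ ≤ n ∧ P.getVert j₀ ∉ H := Nat.sInf_mem hS1ne
    have hj₀ge : i₀ + 2 ≤ j₀ := by
      rcases Nat.lt_or_ge j₀ (i₀ + 2) with hlt | hge
      · exfalso
        have he : j₀ = i₀ + 1 := by omega
        rw [he] at hj₀3
        exact hj₀3 hnext
      · exact hge
    have hmid : ∀ m, i₀ < m → m < j₀ → P.getVert m ∈ H := by
      intro m hm1 hm2
      by_contra hmH
      have hmm : m ∈ {m | i₀ < m ∧ m ≤ n ∧ P.getVert m ∉ H} := ⟨hm1, by omega, hmH⟩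
      exact absurd (Nat.sInf_le hmm) (by omega)
    have hprev : P.getVert (j₀ - 1) ∈ H := hmid _ (by omega) (by omega)
    have hj₀nbr : G.Adj (P.getVert j₀) (P.getVert (j₀ - 1)) := by
      have := P.adj_getVert_succ (i := j₀ - 1) (by omega)
      rw [Nat.sub_add_cancel (by omega)] at this
      exact this.symm
    have hj₀vl : P.getVert j₀ ≠ vl := by
      intro he
      apply h1
      rw [← he]
      exact ⟨hj₀3, _, hprev, hj₀nbr⟩
    have hj₀lt : j₀ < n := lt_of_le_of_ne hj₀2 (fun he => hj₀vl (by rw [he, hgn]))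
    have hcl : ∀ z, (∃ m, i₀ < m ∧ m < j₀ ∧ P.getVert m = z) → ∀ u, u ∈ H → G.Adj z u →
        (∃ m, i₀ < m ∧ m < j₀ ∧ P.getVert m = u) := by
      rintro z ⟨m, hm1, hm2, rfl⟩ u huH hadj
      have hm_n : m < n := by omega
      have hdegm : degOf G (P.getVert m) = 2 :=
        hdeg2 _ (hmemVP m (by omega)) (hne_vl m hm_n)
      have ha1 : G.Adj (P.getVert m) (P.getVert (m - 1)) := by
        have := P.adj_getVert_succ (i := m - 1) (by omega)
        rw [Nat.sub_add_cancel (by omega)] at this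
        exact this.symm
      have ha2 : G.Adj (P.getVert m) (P.getVert (m + 1)) := P.adj_getVert_succ (by omega)
      have hne : P.getVert (m - 1) ≠ P.getVert (m + 1) := by
        intro he
        have := getVert_inj hP (m - 1) (by omega) (m + 1) (by omega) he
        omega
      rcases nbr_eq hdegm ha1 ha2 hne hadj with he | he
      · rcases Nat.eq_or_lt_of_le (by omega : i₀ ≤ m - 1) with h' | h'
        · exfalso; rw [he, ← h'] at huH; exact hi₀H huH
        · exact ⟨m - 1, h', by omega, he.symm⟩
      · rcases Nat.eq_or_lt_of_le (by omega : m + 1 ≤ j₀) with h' | h'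
        · exfalso; rw [he, h'] at huH; exact hj₀3 huH
        · exact ⟨m + 1, by omega, h', he.symm⟩
    obtain ⟨t₀, ht₀⟩ := hT
    have ht₀H : t₀ ∈ H := hTH ht₀
    obtain ⟨pw⟩ := hHtree.isConnected.preconnected ⟨P.getVert (i₀ + 1), hnext⟩ ⟨t₀, ht₀H⟩
    have hQt₀ : ∃ m, i₀ < m ∧ m < j₀ ∧ P.getVert m = t₀ :=
      reach_closed hcl pw ⟨i₀ + 1, by omega, by omega, rfl⟩
    obtain ⟨m, hm1, hm2, hm3⟩ := hQt₀
    have : t₀ ∈ VP := by rw [← hm3]; exact hmemVP m (by omega)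
    exact Set.disjoint_left.mp hPT this ht₀
  have hvlH : vl ∈ H := by rw [← hgn]; exact hrest n hi₀lt le_rfl
  have hseteq : openNbhd G H ∩ (VP \ (F ∪ {vl})) = {P.getVert i₀} := by
    ext z
    constructor
    · rintro ⟨⟨hzH, -⟩, hzVP, -⟩
      obtain ⟨i, hival, hile⟩ := hVPidx z hzVP
      have hii : i = i₀ := by
        rcases lt_trichotomy i i₀ with h' | h' | h'
        · exact absurd (by rw [← hival]; exact hbefore i h' : z ∈ H) hzH
        · exact h'
        · exact absurd (by rw [← hival]; exact hrest i h' hile : z ∈ H) hzH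
      rw [Set.mem_singleton_iff, ← hival, hii]
    · intro hz
      rw [Set.mem_singleton_iff] at hz
      subst hz
      obtain ⟨u, huH, hadj⟩ := hnbr
      refine ⟨⟨hi₀H, u, huH, hadj⟩, hmemVP i₀ hi₀n, ?_⟩
      simp only [Set.mem_union, Set.mem_singleton_iff]
      push_neg
      exact ⟨fun hF => hi₀H (hFH hF), hi₀vl⟩
  refine ⟨h1, ⟨?_, hvlH⟩, h3⟩
  rw [hseteq]
  exact Set.ncard_singleton _

end Secluded
end
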